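/- Let y ∈ E and 0 ≤ j ≤ r, and write β_j := Dα_j ∈ Φ0 (so β_i = α_i for 1 ≤ i ≤ r and β_0 = −φ). Then: (1) if s_j·y = y, then 𝔰_y^{β_j∨} = k_j^{−2} and s_{β_j}·𝔰_y = k_j^{2β_j}·𝔰_y in T_Λ, where k_j^{2β_j} ∈ T_Λ denotes the character λ ↦ k_j^{2·β_j(λ)}; (2) if s_j·y ≠ y, then s_{β_j}·𝔰_y = 𝔰_{s_j·y} in T_Λ. -/

import Mathlib

open scoped InnerProductSpace Classical

noncomputable section

namespace SSV

variable {E : Type*} [NormedAddCommGroup E] [InnerProductSpace ℝ E]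

/-- The coroot `α∨ = (2/‖α‖²)·α` of `α ∈ E`, under the identification of `E*` with `E`
via the inner product (a root `α` acts on `E` as the linear functional `y ↦ ⟪α,y⟫`). -/
def cv (α : E) : E := (2 / ⟪α, α⟫_ℝ) • α

/-- The linear functional `y ↦ ⟪α∨, y⟫ = 2⟪α,y⟫/‖α‖²`. -/
def rootForm (α : E) : E →ₗ[ℝ] ℝ where
  toFun y := 2 / ⟪α, α⟫_ℝ * ⟪α, y⟫_ℝ
  map_add' y z := by rw [inner_add_right]; ring
  map_smul' c y := by
    simp only [RingHom.id_apply, smul_eq_mul, real_inner_smul_right]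
    ring

/-- The orthogonal reflection `s_α : y ↦ y − α(y)·α∨` in the hyperplane `α = 0`. -/
def lrefl (α : E) : E ≃ₗ[ℝ] E :=
  if h : ⟪α, α⟫_ℝ = 0 then LinearEquiv.refl ℝ E
  else
    Module.reflection (f := rootForm α) (x := α)
      (by simp only [rootForm, LinearMap.coe_mk, AddHom.coe_mk]; field_simp)

/-- The affine reflection `s_a : y ↦ y − a(y)·α∨` associated to the affine root
`a = (α, c)`, i.e. to the affine function `y ↦ α(y) + c = ⟪α,y⟫ + c` on `E`. -/
def aRefl (α : E) (c : ℝ) : E ≃ᵃ[ℝ] E :=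
  (lrefl α).toAffineEquiv.trans (AffineEquiv.constVAdd ℝ E (-(c • cv α)))

/-- The translation `τ(μ) : y ↦ y + μ`. -/
def tr (μ : E) : E ≃ᵃ[ℝ] E := AffineEquiv.constVAdd ℝ E μ

/-- `η = χ_{ℤ_{>0}} − χ_{ℤ_{≤0}} : ℝ → {−1,0,1}`. -/
def eta (x : ℝ) : ℤ :=
  if ∃ n : ℤ, x = (n : ℝ) then (if 0 < x then 1 else -1) else 0

/-- `sgn(ℓ) = ℓ/|ℓ|` for `ℓ ≠ 0`, and `sgn(0) = 1`. -/
def sgnz (l : ℤ) : ℤ := if 0 ≤ l then 1 else -1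

/-- The alternating word `j j' j j' ⋯` of length `m`. -/
def altList {n : ℕ} (j j' : Fin n) (m : ℕ) : List (Fin n) :=
  (List.range m).map fun s => if s % 2 = 0 then j else j'

/-- Evaluation of the affine function `a = (α, c)` at `y`: `a(y) = α(y) + c`. -/
def aval (a : E × ℝ) (y : E) : ℝ := ⟪a.1, y⟫_ℝ + a.2

/-- The contragredient action of `w` on affine roots: `(w·a)(y) = a(w⁻¹·y)`. -/
def wact (w : E ≃ᵃ[ℝ] E) (a : E × ℝ) : E × ℝ :=
  (w.linear a.1, a.2 - ⟪w.linear a.1, w 0⟫_ℝ)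

/-- The relation `y ≺_α z`. -/
def precA (α : E) (y z : E) : Prop :=
  (∃ l : ℤ, y = aRefl α (l : ℝ) z) ∧
    (|⟪α, y⟫_ℝ| < |⟪α, z⟫_ℝ| ∨ (⟪α, y⟫_ℝ = -⟪α, z⟫_ℝ ∧ 0 < ⟪α, y⟫_ℝ))

/-- The data of a reduced irreducible finite root system `Φ0` realised in `E* ≅ E`,
normalised so that long roots have squared length `2/m²`, together with a choice of
positive roots, simple roots `α_1, …, α_r`, and the corresponding highest root `φ`. -/
structure Data (E : Type*) [NormedAddCommGroup E] [InnerProductSpace ℝ E] where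
  r : ℕ
  r_pos : 0 < r
  m : ℕ
  m_pos : 0 < m
  Φ0 : Finset E
  pos : Finset E
  simple : Fin r → E
  hroot : E
  root_ne_zero : ∀ α ∈ Φ0, α ≠ 0
  root_neg_mem : ∀ α ∈ Φ0, -α ∈ Φ0
  root_reduced : ∀ α ∈ Φ0, ∀ c : ℝ, c • α ∈ Φ0 → c = 1 ∨ c = -1
  root_refl_mem : ∀ α ∈ Φ0, ∀ β ∈ Φ0, aRefl α 0 β ∈ Φ0
  root_crystal : ∀ α ∈ Φ0, ∀ β ∈ Φ0, ∃ n : ℤ, ⟪cv β, α⟫_ℝ = (n : ℝ)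
  root_irred : ∀ A B : Set E, (Φ0 : Set E) = A ∪ B → A.Nonempty → B.Nonempty →
    (∀ a ∈ A, ∀ b ∈ B, ⟪a, b⟫_ℝ = 0) → False
  root_norm_le : ∀ α ∈ Φ0, ⟪α, α⟫_ℝ ≤ 2 / (m : ℝ) ^ 2
  root_norm_int : ∀ α ∈ Φ0, ∃ n : ℤ, (n : ℝ) * ⟪α, α⟫_ℝ = 2
  pos_subset : pos ⊆ Φ0
  pos_dichotomy : ∀ α ∈ Φ0, (α ∈ pos ∧ -α ∉ pos) ∨ (α ∉ pos ∧ -α ∈ pos)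
  simple_mem_pos : ∀ i, simple i ∈ pos
  simple_indep : LinearIndependent ℝ simple
  pos_nat_comb : ∀ α ∈ pos, ∃ n : Fin r → ℕ, α = ∑ i, (n i : ℝ) • simple i
  hroot_mem_pos : hroot ∈ pos
  hroot_long : ⟪hroot, hroot⟫_ℝ = 2 / (m : ℝ) ^ 2
  hroot_highest : ∀ α ∈ Φ0, ∃ n : Fin r → ℕ, hroot - α = ∑ i, (n i : ℝ) • simple i

namespace Data

variable (D : Data E)

/-- The coroot lattice `Q∨`. -/
def Qv : AddSubgroup E := AddSubgroup.closure (cv '' (D.Φ0 : Set E))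

/-- The simple affine roots `α_0 = (−φ, 1)` and `α_i = (α_i, 0)` (`1 ≤ i ≤ r`), as pairs
`(gradient, constant term)`. -/
def asimple : Fin (D.r + 1) → E × ℝ :=
  Fin.cases (-D.hroot, (1 : ℝ)) fun i => (D.simple i, (0 : ℝ))

/-- The simple reflections `s_0, …, s_r` of the affine Weyl group. -/
def sgen (j : Fin (D.r + 1)) : E ≃ᵃ[ℝ] E := aRefl (D.asimple j).1 (D.asimple j).2

/-- `a = (α, c)` is an affine root iff `α ∈ Φ0` and `c ∈ ℤ`. -/
def IsAffRoot (a : E × ℝ) : Prop := a.1 ∈ D.Φ0 ∧ ∃ n : ℤ, a.2 = (n : ℝ)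

/-- `a` is a positive affine root. -/
def IsPosAff (a : E × ℝ) : Prop :=
  D.IsAffRoot a ∧ (0 < a.2 ∨ (a.2 = 0 ∧ a.1 ∈ D.pos))

/-- The set of reflections `s_α`, `α ∈ Φ0`. -/
def reflSet : Set (E ≃ᵃ[ℝ] E) := {g | ∃ α ∈ D.Φ0, g = aRefl α 0}

/-- The set of translations `τ(μ)`, `μ ∈ Q∨`. -/
def trSet : Set (E ≃ᵃ[ℝ] E) := {g | ∃ μ ∈ D.Qv, g = tr μ}

/-- The finite Weyl group `W0`, generated by the reflections `s_α`. -/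
def W0 : Subgroup (E ≃ᵃ[ℝ] E) := Subgroup.closure D.reflSet

/-- The affine Weyl group `W = W0 ⋉ Q∨`. -/
def W : Subgroup (E ≃ᵃ[ℝ] E) := Subgroup.closure (D.reflSet ∪ D.trSet)

/-- The inversion set `Π(w) = Φ+ ∩ w⁻¹Φ−`. -/
def PiSet (w : E ≃ᵃ[ℝ] E) : Set (E × ℝ) :=
  {a | D.IsPosAff a ∧ ¬D.IsPosAff (wact w a)}

/-- The length function `ℓ(w) := #Π(w)`. -/
def len (w : E ≃ᵃ[ℝ] E) : ℕ := (D.PiSet w).ncard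

/-- The open fundamental alcove `C₊`. -/
def Cp : Set E := {y | ∀ α ∈ D.pos, 0 < ⟪α, y⟫_ℝ ∧ ⟪α, y⟫_ℝ < 1}

/-- The closed fundamental alcove `C̄₊`. -/
def Cbar : Set E := closure D.Cp

/-- The face `C^J` of `C̄₊` (for `J ⊊ {0,…,r}`). -/
def CJ (J : Set (Fin (D.r + 1))) : Set E :=
  {c | c ∈ D.Cbar ∧ ∀ j, aval (D.asimple j) c = 0 ↔ j ∈ J}

/-- The orbit `O_c = W·c`. -/
def Orb (c : E) : Set E := {y | ∃ w ∈ D.W, w c = y}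

/-- The unique point `c_y ∈ C̄₊` in the `W`-orbit of `y`. -/
def cpt (y : E) : E :=
  if h : ∃ c, c ∈ D.Cbar ∧ ∃ w ∈ D.W, w c = y then h.choose else 0

/-- The unique shortest element `w_y ∈ W` with `w_y · c_y = y`. -/
def wmin (y : E) : E ≃ᵃ[ℝ] E :=
  if h : ∃ w, (w ∈ D.W ∧ w (D.cpt y) = y) ∧
      ∀ u, u ∈ D.W → u (D.cpt y) = y → D.len w ≤ D.len u then
    h.choose
  else 1

/-- Reflections of the Coxeter system `(W, {s_0, …, s_r})`. -/
def IsCoxRefl (g : E ≃ᵃ[ℝ] E) : Prop := ∃ w ∈ D.W, ∃ j, g = w * D.sgen j * w⁻¹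

/-- A single step in the Bruhat order. -/
def bstep (u v : E ≃ᵃ[ℝ] E) : Prop :=
  (∃ g, D.IsCoxRefl g ∧ v = g * u) ∧ D.len u < D.len v

/-- The Bruhat order `≤_B` of `(W, {s_0, …, s_r})`. -/
def bruhatLE : (E ≃ᵃ[ℝ] E) → (E ≃ᵃ[ℝ] E) → Prop := Relation.ReflTransGen D.bstep

/-- The strict Bruhat order `<_B`. -/
def bruhatLT (u v : E ≃ᵃ[ℝ] E) : Prop := D.bruhatLE u v ∧ u ≠ v

/-- The parabolic Bruhat order `≤` on `E`: `y ≤ z` iff `y ∈ W·z` and `w_y ≤_B w_z`. -/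
def paraLE (y z : E) : Prop :=
  (∃ w ∈ D.W, w z = y) ∧ D.bruhatLE (D.wmin y) (D.wmin z)

/-- The strict parabolic Bruhat order `<` on `E`. -/
def paraLT (y z : E) : Prop := D.paraLE y z ∧ y ≠ z

/-- The relation `≺`, the transitive closure of the `≺_α` (`α ∈ Φ0+`). -/
def prec : E → E → Prop :=
  Relation.TransGen fun y z => ∃ α ∈ D.pos, precA α y z

/-- The relation `⪯`. -/
def precLE (y z : E) : Prop := D.prec y z ∨ y = z

/-- The parabolic subgroup `W_J` of `W`. -/
def WJ (J : Set (Fin (D.r + 1))) : Subgroup (E ≃ᵃ[ℝ] E) :=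
  Subgroup.closure {g | ∃ j ∈ J, g = D.sgen j}

/-- The set `W^J` of minimal-length representatives of the cosets `W/W_J`. -/
def WminJ (J : Set (Fin (D.r + 1))) : Set (E ≃ᵃ[ℝ] E) :=
  {w | w ∈ D.W ∧ ∀ u ∈ D.WJ J, D.len w ≤ D.len (w * u)}

/-- Dominant elements: `α(μ) ≥ 0` for all `α ∈ Φ0+`. -/
def IsDom (μ : E) : Prop := ∀ α ∈ D.pos, 0 ≤ ⟪α, μ⟫_ℝ

/-- `Π0(v) = Φ0+ ∩ v⁻¹Φ0−` for `v ∈ W0`. -/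
def Pi0 (v : E ≃ᵃ[ℝ] E) : Finset E := D.pos.filter fun α => -(v.linear α) ∈ D.pos

/-- `χ = χ₊ − χ₋ : Φ0 → {±1}`. -/
def chi (α : E) : ℤ := if α ∈ D.pos then 1 else -1

end Data

/-- The character `𝔰_y : μ ↦ ∏_{α ∈ Φ0+} k_α^{η(α(y))·α(μ)}` (evaluated at points `μ` where
all `α(μ)` are integers, e.g. on a lattice `Λ ∈ 𝓛`). -/
def sweight {F : Type*} [Field F] (D : Data E) (k : E → Fˣ) (y μ : E) : Fˣ :=
  ∏ α ∈ D.pos, k α ^ (eta ⟪α, y⟫_ℝ * ⌊⟪α, μ⟫_ℝ⌋)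

/-- The action of `w ∈ W` on characters of `Q∨`: for `w = τ(ν)v`,
`(w·t)(μ) = q^{⟪ν,μ⟫}·t(v⁻¹μ)`. -/
def charAct {F : Type*} [Field F] (q : Fˣ) (w : E ≃ᵃ[ℝ] E) (t : E → Fˣ) : E → Fˣ :=
  fun μ => q ^ ⌊⟪w 0, μ⟫_ℝ⌋ * t (w.linear.symm μ)

/-- `t` defines a multiplicative character of `Q∨`, i.e. an element of `T = Hom(Q∨, Fˣ)`. -/
def IsChar {F : Type*} [Field F] (D : Data E) (t : E → Fˣ) : Prop :=
  ∀ μ ∈ D.Qv, ∀ ν ∈ D.Qv, t (μ + ν) = t μ * t ν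

/-- `q_α := q^{2/‖α‖²}`. -/
def qroot {F : Type*} [Field F] (q : Fˣ) (α : E) : Fˣ := q ^ ⌊2 / ⟪α, α⟫_ℝ⌋

/-- Membership in `T_J`: `t ∈ T` with `t^{α_i∨} = 1` for `i ∈ J ∩ {1,…,r}`, and
`q_φ·t^{−φ∨} = 1` if `0 ∈ J`. -/
def InTJ {F : Type*} [Field F] (D : Data E) (q : Fˣ) (J : Set (Fin (D.r + 1)))
    (t : E → Fˣ) : Prop :=
  IsChar D t ∧ (∀ i : Fin D.r, i.succ ∈ J → t (cv (D.simple i)) = 1) ∧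
    ((0 : Fin (D.r + 1)) ∈ J → qroot q D.hroot * t (-cv D.hroot) = 1)

/-- `κ_v(y) = ∏_{α ∈ Π0(v)} k_α^{−η(α(y))}`. -/
def kappa {F : Type*} [Field F] (D : Data E) (k : E → Fˣ) (v : E ≃ᵃ[ℝ] E) (y : E) : Fˣ :=
  ∏ α ∈ D.Pi0 v, k α ^ (-eta ⟪α, y⟫_ℝ)

/-- The (quasi-)monomial `x^y`, as an element of `⊕_{z ∈ E} F x^z`. -/
def xmono (F : Type*) [Field F] (y : E) : E →₀ F := Finsupp.single y 1

/-- The multiplication operator `π(x^μ) : x^y ↦ x^{y+μ}`. -/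
def xop (F : Type*) [Field F] (μ : E) : Module.End F (E →₀ F) :=
  Finsupp.lmapDomain F F (· + μ)

/-- The truncated divided difference `∇_i(x^y)` in its explicit form: with `n = ⌊α(y)⌋`,
`−(x^{y−α∨} + ⋯ + x^{y−nα∨})` if `n ≥ 1`, `0` if `n = 0`, and
`x^y + x^{y+α∨} + ⋯ + x^{y+(−n−1)α∨}` if `n ≤ −1`. -/
def nablaS (F : Type*) [Field F] (α y : E) : E →₀ F :=
  if 1 ≤ ⌊⟪α, y⟫_ℝ⌋ then
    -∑ s ∈ Finset.Icc (1 : ℤ) ⌊⟪α, y⟫_ℝ⌋, Finsupp.single (y - (s : ℝ) • cv α) (1 : F)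
  else
    ∑ s ∈ Finset.Icc (0 : ℤ) (-⌊⟪α, y⟫_ℝ⌋ - 1), Finsupp.single (y + (s : ℝ) • cv α) (1 : F)

/-- The truncated divided difference `∇_0(x^y)` in its explicit form: with `n = ⌊−φ(y)⌋`,
`−(q_φ^{−1}x^{y+φ∨} + ⋯ + q_φ^{−n}x^{y+nφ∨})` if `n ≥ 1`, `0` if `n = 0`, and
`x^y + q_φ x^{y−φ∨} + ⋯ + q_φ^{−n−1}x^{y+(n+1)φ∨}` if `n ≤ −1`. -/
def nabla0 {F : Type*} [Field F] (D : Data E) (q : Fˣ) (y : E) : E →₀ F :=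
  if 1 ≤ ⌊-⟪D.hroot, y⟫_ℝ⌋ then
    -∑ s ∈ Finset.Icc (1 : ℤ) ⌊-⟪D.hroot, y⟫_ℝ⌋,
      (((qroot q D.hroot : Fˣ) : F) ^ (-s)) • Finsupp.single (y + (s : ℝ) • cv D.hroot) (1 : F)
  else
    ∑ s ∈ Finset.Icc (0 : ℤ) (-⌊-⟪D.hroot, y⟫_ℝ⌋ - 1),
      (((qroot q D.hroot : Fˣ) : F) ^ s) • Finsupp.single (y - (s : ℝ) • cv D.hroot) (1 : F)

/-- `k_j := k_{α_j}` (`0 ≤ j ≤ r`), with `k_0 = k_φ`. -/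
def kgen {F : Type*} [Field F] (D : Data E) (k : E → Fˣ) : Fin (D.r + 1) → Fˣ :=
  Fin.cases (k D.hroot) fun i => k (D.simple i)

/-- The image of the monomial `x^y` under the truncated Demazure–Lusztig operator `π(T_j)`:
`π(T_i)x^y = k_i^{χ_ℤ(α_i(y))}x^{s_i y} + (k_i − k_i^{−1})∇_i(x^y)` for `1 ≤ i ≤ r`, and
`π(T_0)x^y = k_0^{χ_ℤ(α_0(y))}𝔱_y^{φ∨}x^{s_φ y} + (k_0 − k_0^{−1})∇_0(x^y)`. -/
def Tfun {F : Type*} [Field F] (D : Data E) (q : Fˣ) (k t : E → Fˣ) :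
    Fin (D.r + 1) → E → E →₀ F :=
  Fin.cases
    (fun y =>
      ((if ∃ n : ℤ, aval (D.asimple 0) y = (n : ℝ) then ((k D.hroot : Fˣ) : F) else 1) *
          ((charAct q (D.wmin y) t (cv D.hroot) : Fˣ) : F)) •
          Finsupp.single (aRefl D.hroot 0 y) (1 : F) +
        (((k D.hroot : Fˣ) : F) - (((k D.hroot)⁻¹ : Fˣ) : F)) • nabla0 D q y)
    fun i y =>
      (if ∃ n : ℤ, ⟪D.simple i, y⟫_ℝ = (n : ℝ) then ((k (D.simple i) : Fˣ) : F) else 1) •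
          Finsupp.single (aRefl (D.simple i) 0 y) (1 : F) +
        (((k (D.simple i) : Fˣ) : F) - (((k (D.simple i))⁻¹ : Fˣ) : F)) • nablaS F (D.simple i) y

/-- The truncated Demazure–Lusztig operator `π(T_j)` on `⊕_{y ∈ E} F x^y`. -/
def Top {F : Type*} [Field F] (D : Data E) (q : Fˣ) (k t : E → Fˣ) (j : Fin (D.r + 1)) :
    Module.End F (E →₀ F) :=
  Finsupp.linearCombination F (Tfun D q k t j)

/-- `π(((1 − x^{−α(μ)α∨})/(1 − x^{α∨}))·x^μ)` applied to `x^y`: the finite geometric sum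
appearing in the cross relation for `T_i`. -/
def crossS (F : Type*) [Field F] (α μ y : E) : E →₀ F :=
  if 1 ≤ ⌊⟪α, μ⟫_ℝ⌋ then
    -∑ s ∈ Finset.Icc (1 : ℤ) ⌊⟪α, μ⟫_ℝ⌋, Finsupp.single (y + μ - (s : ℝ) • cv α) (1 : F)
  else
    ∑ s ∈ Finset.Icc (0 : ℤ) (-⌊⟪α, μ⟫_ℝ⌋ - 1), Finsupp.single (y + μ + (s : ℝ) • cv α) (1 : F)

/-- `π(((1 − (q_φ x^{−φ∨})^{φ(μ)})/(1 − q_φ x^{−φ∨}))·x^μ)` applied to `x^y`: the finite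
geometric sum appearing in the cross relation for `T_0`. -/
def cross0 {F : Type*} [Field F] (D : Data E) (q : Fˣ) (μ y : E) : E →₀ F :=
  if 0 ≤ ⌊⟪D.hroot, μ⟫_ℝ⌋ then
    ∑ s ∈ Finset.Icc (0 : ℤ) (⌊⟪D.hroot, μ⟫_ℝ⌋ - 1),
      (((qroot q D.hroot : Fˣ) : F) ^ s) • Finsupp.single (y + μ - (s : ℝ) • cv D.hroot) (1 : F)
  else
    -∑ s ∈ Finset.Icc (1 : ℤ) (-⌊⟪D.hroot, μ⟫_ℝ⌋),
      (((qroot q D.hroot : Fˣ) : F) ^ (-s)) • Finsupp.single (y + μ + (s : ℝ) • cv D.hroot) (1 : F)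

/-- The quasi-monomial `x^y` in the model `Q^{(c)} ⊆ (E → Q)` of `Q ⊗_P P^{(c)}`:
`x^y` is the function `z ↦ x^{y−z}` supported on `y + Q∨`. -/
def xiQ {Q : Type*} [Field Q] (D : Data E) (mono : E → Q) (y : E) : E → Q :=
  fun z => if z - y ∈ D.Qv then mono (y - z) else 0

/-- Membership in the model `Q^{(c)} ⊆ (E → Q)` of `Q ⊗_P P^{(c)}`: functions supported on
`O_c` satisfying the covariance `ξ(z + ν) = x^{−ν}·ξ(z)` (`ν ∈ Q∨`). -/
def IsQc {Q : Type*} [Field Q] (D : Data E) (mono : E → Q) (c : E) (ξ : E → Q) : Prop :=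
  (∀ z, z ∉ D.Orb c → ξ z = 0) ∧
    ∀ z ∈ D.Orb c, ∀ ν ∈ D.Qv, ξ (z + ν) = (mono ν)⁻¹ * ξ z

/-- `x^{α_0∨} = q_φ x^{−φ∨}` as an element of `Q`. -/
def xroot0 {F Q : Type*} [Field F] [Field Q] (D : Data E) (ι : F →+* Q) (q : Fˣ)
    (mono : E → Q) : Q :=
  ι ((qroot q D.hroot : Fˣ) : F) * mono (-cv D.hroot)

/-- The right-hand side of the defining formula for `σ(s_j)(x^y)`:
`(k_j^{χ_ℤ(α_j(y))}(x^{α_j∨} − 1)/(k_j x^{α_j∨} − k_j^{−1}))·s_{j,𝔱}x^y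
 + ((k_j − k_j^{−1})/(k_j x^{α_j∨} − k_j^{−1}))·x^{y − ⌊Dα_j(y)⌋α_j∨}`. -/
def sigmaFormula {F Q : Type*} [Field F] [Field Q] (D : Data E) (ι : F →+* Q) (q : Fˣ)
    (k t : E → Fˣ) (mono : E → Q) : Fin (D.r + 1) → E → E → Q :=
  Fin.cases
    (fun y =>
      (((if ∃ n : ℤ, aval (D.asimple 0) y = (n : ℝ) then ι ((k D.hroot : Fˣ) : F) else 1) *
            (xroot0 D ι q mono - 1)) /
          (ι ((k D.hroot : Fˣ) : F) * xroot0 D ι q mono - ι (((k D.hroot)⁻¹ : Fˣ) : F))) •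
          (ι ((charAct q (D.wmin y) t (cv D.hroot) : Fˣ) : F) •
            xiQ D mono (aRefl D.hroot 0 y)) +
        ((ι ((k D.hroot : Fˣ) : F) - ι (((k D.hroot)⁻¹ : Fˣ) : F)) /
          (ι ((k D.hroot : Fˣ) : F) * xroot0 D ι q mono - ι (((k D.hroot)⁻¹ : Fˣ) : F))) •
          (ι (((qroot q D.hroot ^ (-⌊-⟪D.hroot, y⟫_ℝ⌋) : Fˣ) : F)) •
            xiQ D mono (y + (⌊-⟪D.hroot, y⟫_ℝ⌋ : ℝ) • cv D.hroot)))
    fun i y =>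
      (((if ∃ n : ℤ, ⟪D.simple i, y⟫_ℝ = (n : ℝ) then ι ((k (D.simple i) : Fˣ) : F) else 1) *
            (mono (cv (D.simple i)) - 1)) /
          (ι ((k (D.simple i) : Fˣ) : F) * mono (cv (D.simple i)) -
            ι (((k (D.simple i))⁻¹ : Fˣ) : F))) •
          xiQ D mono (aRefl (D.simple i) 0 y) +
        ((ι ((k (D.simple i) : Fˣ) : F) - ι (((k (D.simple i))⁻¹ : Fˣ) : F)) /
          (ι ((k (D.simple i) : Fˣ) : F) * mono (cv (D.simple i)) -
            ι (((k (D.simple i))⁻¹ : Fˣ) : F))) •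
          xiQ D mono (y - (⌊⟪D.simple i, y⟫_ℝ⌋ : ℝ) • cv (D.simple i))

end SSV

namespace SSV

section Aux

variable {E : Type*} [NormedAddCommGroup E] [InnerProductSpace ℝ E]

/-! ### eta lemmas -/

lemma eta_intCast (n : ℤ) : eta (n : ℝ) = if 0 < n then 1 else -1 := by
  have h : ∃ m : ℤ, (n : ℝ) = m := ⟨n, rfl⟩
  unfold eta
  rw [if_pos h]
  by_cases hn : 0 < n
  · rw [if_pos (by exact_mod_cast hn), if_pos hn]
  · rw [if_neg (by exact_mod_cast hn), if_neg hn]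

lemma eta_zero : eta (0 : ℝ) = -1 := by simpa using eta_intCast 0

lemma eta_one : eta (1 : ℝ) = 1 := by simpa using eta_intCast 1

lemma eta_one_sub (x : ℝ) : eta (1 - x) = -eta x := by
  by_cases h : ∃ n : ℤ, x = n
  · obtain ⟨n, rfl⟩ := h
    have h1 : (1 : ℝ) - n = ((1 - n : ℤ) : ℝ) := by push_cast; ring
    rw [h1, eta_intCast, eta_intCast]
    by_cases hn : 0 < n
    · rw [if_neg (by omega), if_pos hn]
    · rw [if_pos (by omega), if_neg hn]; norm_num
  · have h2 : ¬∃ m : ℤ, 1 - x = m := by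
      rintro ⟨m, hm⟩; exact h ⟨1 - m, by push_cast at hm ⊢; linarith⟩
    unfold eta
    rw [if_neg h2, if_neg h, neg_zero]

lemma eta_neg {x : ℝ} (hx : x ≠ 0) : eta (-x) = -eta x := by
  by_cases h : ∃ n : ℤ, x = n
  · obtain ⟨n, rfl⟩ := h
    have hn0 : n ≠ 0 := by exact_mod_cast hx
    have h1 : -(n : ℝ) = ((-n : ℤ) : ℝ) := by push_cast; ring
    rw [h1, eta_intCast, eta_intCast]
    by_cases hn : 0 < n
    · rw [if_neg (by omega), if_pos hn]
    · rw [if_pos (by omega), if_neg hn]; norm_num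
  · have h2 : ¬∃ m : ℤ, -x = m := by
      rintro ⟨m, hm⟩; exact h ⟨-m, by push_cast at hm ⊢; linarith⟩
    unfold eta
    rw [if_neg h2, if_neg h, neg_zero]

lemma eta_sub_one {x : ℝ} (hx : x ≠ 1) : eta (x - 1) = eta x := by
  by_cases h : ∃ n : ℤ, x = n
  · obtain ⟨n, rfl⟩ := h
    have hn1 : n ≠ 1 := by exact_mod_cast hx
    have h1 : (n : ℝ) - 1 = ((n - 1 : ℤ) : ℝ) := by push_cast; ring
    rw [h1, eta_intCast, eta_intCast]
    by_cases hn : 0 < n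
    · rw [if_pos (by omega), if_pos hn]
    · rw [if_neg (by omega), if_neg hn]
  · have h2 : ¬∃ m : ℤ, x - 1 = m := by
      rintro ⟨m, hm⟩; exact h ⟨m + 1, by push_cast at hm ⊢; linarith⟩
    unfold eta
    rw [if_neg h2, if_neg h]

lemma floor_neg_int {x : ℝ} {n : ℤ} (h : x = n) : ⌊-x⌋ = -⌊x⌋ := by
  rw [h, ← Int.cast_neg, Int.floor_intCast, Int.floor_intCast]

/-! ### reflection lemmas -/

lemma cv_neg (α : E) : cv (-α) = -cv α := by
  simp [cv, smul_neg]

lemma inner_cv (α y : E) : ⟪cv α, y⟫_ℝ = 2 / ⟪α, α⟫_ℝ * ⟪α, y⟫_ℝ := by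
  rw [cv, real_inner_smul_left]

lemma inner_cv_self {α : E} (h : ⟪α, α⟫_ℝ ≠ 0) : ⟪cv α, α⟫_ℝ = 2 := by
  rw [inner_cv]; field_simp

lemma aRefl_apply {α : E} (h : ⟪α, α⟫_ℝ ≠ 0) (c : ℝ) (y : E) :
    aRefl α c y = y - (⟪α, y⟫_ℝ + c) • cv α := by
  have h1 : aRefl α c y = -(c • cv α) +ᵥ ((lrefl α) y) := rfl
  rw [h1, lrefl, dif_neg h, Module.reflection_apply]
  simp only [rootForm, LinearMap.coe_mk, AddHom.coe_mk, vadd_eq_add, cv]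
  module

lemma aRefl_zero_degenerate {α : E} (h : ⟪α, α⟫_ℝ = 0) (y : E) : aRefl α 0 y = y := by
  have h1 : aRefl α 0 y = -((0 : ℝ) • cv α) +ᵥ ((lrefl α) y) := rfl
  rw [h1, lrefl, dif_pos h]
  simp

lemma aRefl_apply' {α : E} (h : ⟪α, α⟫_ℝ ≠ 0) (y : E) :
    aRefl α 0 y = y - ⟪cv α, y⟫_ℝ • α := by
  rw [aRefl_apply h, add_zero, inner_cv, cv]
  module

lemma inner_aRefl (α γ z : E) : ⟪aRefl α 0 γ, z⟫_ℝ = ⟪γ, aRefl α 0 z⟫_ℝ := by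
  by_cases h : ⟪α, α⟫_ℝ = 0
  · rw [aRefl_zero_degenerate h, aRefl_zero_degenerate h]
  · rw [aRefl_apply' h, aRefl_apply' h, inner_sub_left, inner_sub_right,
      real_inner_smul_left, real_inner_smul_right, inner_cv, inner_cv,
      real_inner_comm γ α]
    ring

lemma aRefl_aRefl (α : E) (y : E) : aRefl α 0 (aRefl α 0 y) = y := by
  by_cases h : ⟪α, α⟫_ℝ = 0
  · rw [aRefl_zero_degenerate h, aRefl_zero_degenerate h]
  · have h2 : ⟪cv α, α⟫_ℝ = 2 := inner_cv_self h
    rw [aRefl_apply' h (aRefl α 0 y), aRefl_apply' h y, inner_sub_right,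
      real_inner_smul_right, h2]
    module

lemma aRefl_self {α : E} (h : ⟪α, α⟫_ℝ ≠ 0) : aRefl α 0 α = -α := by
  rw [aRefl_apply' h, inner_cv_self h]
  module

lemma aRefl_cv {α : E} (h : ⟪α, α⟫_ℝ ≠ 0) : aRefl α 0 (cv α) = -cv α := by
  have h2 : ⟪cv α, cv α⟫_ℝ = 2 / ⟪α, α⟫_ℝ * 2 := by
    nth_rewrite 2 [cv]
    rw [inner_cv, real_inner_smul_right]
    field_simp
  rw [aRefl_apply' h, h2, cv]
  module

lemma aRefl_neg_zero (α : E) (y : E) : aRefl (-α) 0 y = aRefl α 0 y := by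
  by_cases h : ⟪α, α⟫_ℝ = 0
  · rw [aRefl_zero_degenerate h, aRefl_zero_degenerate (by simpa using h)]
  · rw [aRefl_apply' h, aRefl_apply' (by simpa using h : ⟪-α, -α⟫_ℝ ≠ 0), cv_neg,
      inner_neg_left]
    module

lemma aRefl_linear_apply (α : E) (c : ℝ) (v : E) : (aRefl α c).linear v = aRefl α 0 v := by
  have h2 : aRefl α 0 v = (lrefl α) v := by
    have h3 : aRefl α 0 v = -((0 : ℝ) • cv α) +ᵥ ((lrefl α) v) := rfl
    rw [h3]; simp
  rw [h2]
  rfl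

/-! ### Data lemmas -/

lemma Data.inner_self_pos' (D : Data E) {α : E} (hα : α ∈ D.Φ0) : 0 < ⟪α, α⟫_ℝ := by
  rw [real_inner_self_eq_norm_mul_norm]
  have h := norm_pos_iff.2 (D.root_ne_zero α hα)
  exact mul_pos h h

lemma Data.k_aRefl (D : Data E) {F : Type*} [Field F] (k : E → Fˣ)
    (hk : ∀ α ∈ D.Φ0, ∀ w ∈ D.W0, k (w.linear α) = k α)
    {α γ : E} (hα : α ∈ D.Φ0) (hγ : γ ∈ D.Φ0) : k (aRefl α 0 γ) = k γ := by
  have hmem : aRefl α 0 ∈ D.W0 := Subgroup.subset_closure ⟨α, hα, rfl⟩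
  have h := hk γ hγ (aRefl α 0) hmem
  rwa [aRefl_linear_apply] at h

lemma Data.k_neg (D : Data E) {F : Type*} [Field F] (k : E → Fˣ)
    (hk : ∀ α ∈ D.Φ0, ∀ w ∈ D.W0, k (w.linear α) = k α)
    {γ : E} (hγ : γ ∈ D.Φ0) : k (-γ) = k γ := by
  have h := (D.inner_self_pos' hγ).ne'
  rw [← aRefl_self h]
  exact D.k_aRefl k hk hγ hγ

lemma Data.neg_not_pos (D : Data E) {α : E} (hα : α ∈ D.pos) : -α ∉ D.pos := by
  rcases D.pos_dichotomy α (D.pos_subset hα) with h | h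
  · exact h.2
  · exact absurd hα h.1

lemma Data.coeff_zero (D : Data E) (g : Fin D.r → ℝ)
    (h : ∑ i, g i • D.simple i = 0) : ∀ i, g i = 0 :=
  Fintype.linearIndependent_iff.1 D.simple_indep g h

lemma Data.refl_simple_mem_pos (D : Data E) (i : Fin D.r) {α : E} (hα : α ∈ D.pos)
    (hne : α ≠ D.simple i) : aRefl (D.simple i) 0 α ∈ D.pos := by
  set β := D.simple i with hβdef
  have hβpos : β ∈ D.pos := D.simple_mem_pos i
  have hβΦ : β ∈ D.Φ0 := D.pos_subset hβpos
  have hαΦ : α ∈ D.Φ0 := D.pos_subset hα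
  have hs : (0 : ℝ) < ⟪β, β⟫_ℝ := D.inner_self_pos' hβΦ
  have hroot : aRefl β 0 α ∈ D.Φ0 := D.root_refl_mem β hβΦ α hαΦ
  rcases D.pos_dichotomy _ hroot with h | h
  · exact h.1
  exfalso
  obtain ⟨nn, hn⟩ := D.pos_nat_comb _ h.2
  obtain ⟨aa, ha⟩ := D.pos_nat_comb _ hα
  set T : ℝ := ⟪cv β, α⟫_ℝ with hT
  have hexp : -(aRefl β 0 α) = T • β - α := by
    rw [aRefl_apply' hs.ne']; module
  have h1 : ∑ i', (if i' = i then T else 0) • D.simple i' = T • β := by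
    rw [Finset.sum_eq_single i]
    · rw [if_pos rfl]
    · intro b _ hb
      rw [if_neg hb, zero_smul]
    · intro hmem
      exact absurd (Finset.mem_univ i) hmem
  have heq : ∑ i', (((nn i' : ℝ) + (aa i' : ℝ)) - (if i' = i then T else 0)) • D.simple i'
      = 0 := by
    have hsplit : ∀ i' ∈ Finset.univ,
        (((nn i' : ℝ) + (aa i' : ℝ)) - (if i' = i then T else 0)) • D.simple i'
        = ((nn i' : ℝ) • D.simple i' + (aa i' : ℝ) • D.simple i')
            - (if i' = i then T else 0) • D.simple i' := by
      intro i' _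
      rw [sub_smul, add_smul]
    rw [Finset.sum_congr rfl hsplit, Finset.sum_sub_distrib, Finset.sum_add_distrib,
      ← hn, ← ha, h1, hexp]
    abel
  have hz := D.coeff_zero _ heq
  have haa : ∀ i', i' ≠ i → (aa i' : ℝ) = 0 := by
    intro i' hi'
    have h2 := hz i'
    rw [if_neg hi'] at h2
    have h3 : (0 : ℝ) ≤ (nn i' : ℝ) := Nat.cast_nonneg _
    have h4 : (0 : ℝ) ≤ (aa i' : ℝ) := Nat.cast_nonneg _
    linarith
  have hαβ : α = (aa i : ℝ) • β := by
    rw [ha, Finset.sum_eq_single i]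
    · intro b _ hb
      rw [haa b hb, zero_smul]
    · intro hmem
      exact absurd (Finset.mem_univ i) hmem
  rcases D.root_reduced β hβΦ (aa i : ℝ) (by rw [← hαβ]; exact hαΦ) with h1' | h1'
  · exact hne (by rw [hαβ, h1', one_smul])
  · have h4 : (0 : ℝ) ≤ (aa i : ℝ) := Nat.cast_nonneg _
    rw [h1'] at h4
    linarith

lemma Data.hroot_trichotomy (D : Data E) {α : E} (hα : α ∈ D.pos) :
    ⟪cv D.hroot, α⟫_ℝ = 0 ∨
      (⟪cv D.hroot, α⟫_ℝ = 1 ∧ α ≠ D.hroot ∧ D.hroot - α ∈ D.pos) ∨ α = D.hroot := by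
  set φ := D.hroot with hφdef
  have hφpos : φ ∈ D.pos := D.hroot_mem_pos
  have hφΦ : φ ∈ D.Φ0 := D.pos_subset hφpos
  have hαΦ : α ∈ D.Φ0 := D.pos_subset hα
  have hs : (0 : ℝ) < ⟪φ, φ⟫_ℝ := D.inner_self_pos' hφΦ
  obtain ⟨n, hn⟩ := D.root_crystal α hαΦ φ hφΦ
  have hααφφ : ⟪α, α⟫_ℝ ≤ ⟪φ, φ⟫_ℝ := by
    have h1 := D.root_norm_le α hαΦ
    rw [hφdef, D.hroot_long] at *
    exact le_trans h1 (le_of_eq rfl)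
  -- 0 ≤ n
  have hn0 : 0 ≤ n := by
    by_contra hneg
    push_neg at hneg
    have h1 : (1 : ℝ) + (n : ℝ) ≤ 0 := by
      have hneg1 : n ≤ -1 := by omega
      have : (n : ℝ) ≤ -1 := by exact_mod_cast hneg1
      linarith
    have hγ : aRefl φ 0 α ∈ D.Φ0 := D.root_refl_mem φ hφΦ α hαΦ
    obtain ⟨pp, hp⟩ := D.hroot_highest _ hγ
    obtain ⟨ff, hf⟩ := D.pos_nat_comb φ hφpos
    obtain ⟨aa, ha⟩ := D.pos_nat_comb α hα
    have hexp : φ - aRefl φ 0 α = (1 + (n : ℝ)) • φ - α := by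
      rw [aRefl_apply' hs.ne', hn]
      module
    have heq : ∑ i', (((pp i' : ℝ) + (aa i' : ℝ)) - (1 + (n : ℝ)) * (ff i' : ℝ))
        • D.simple i' = 0 := by
      have hsplit : ∀ i' ∈ Finset.univ,
          (((pp i' : ℝ) + (aa i' : ℝ)) - (1 + (n : ℝ)) * (ff i' : ℝ)) • D.simple i'
          = ((pp i' : ℝ) • D.simple i' + (aa i' : ℝ) • D.simple i')
              - (1 + (n : ℝ)) • ((ff i' : ℝ) • D.simple i') := by
        intro i' _
        rw [sub_smul, add_smul, smul_smul]
      rw [Finset.sum_congr rfl hsplit, Finset.sum_sub_distrib, Finset.sum_add_distrib,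
        ← hp, ← ha, ← Finset.smul_sum, ← hf, hexp]
      abel
    have hz := D.coeff_zero _ heq
    have haa : ∀ i', (aa i' : ℝ) = 0 := by
      intro i'
      have h2 := hz i'
      have h3 : (0 : ℝ) ≤ (pp i' : ℝ) := Nat.cast_nonneg _
      have h4 : (0 : ℝ) ≤ (aa i' : ℝ) := Nat.cast_nonneg _
      have h5 : (0 : ℝ) ≤ (ff i' : ℝ) := Nat.cast_nonneg _
      nlinarith
    have hα0 : α = 0 := by
      rw [ha]
      apply Finset.sum_eq_zero
      intro i' _
      rw [haa i', zero_smul]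
    exact D.root_ne_zero α hαΦ hα0
  -- n ≤ 2
  have hns : (n : ℝ) * ⟪φ, φ⟫_ℝ = 2 * ⟪φ, α⟫_ℝ := by
    rw [← hn, inner_cv]
    field_simp
  have hn2 : n ≤ 2 := by
    have hCS : ⟪φ, α⟫_ℝ ≤ ‖φ‖ * ‖α‖ := real_inner_le_norm φ α
    have h5 : ⟪φ, φ⟫_ℝ = ‖φ‖ * ‖φ‖ := real_inner_self_eq_norm_mul_norm φ
    have h6 : ⟪α, α⟫_ℝ = ‖α‖ * ‖α‖ := real_inner_self_eq_norm_mul_norm α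
    have h7 : ‖α‖ ≤ ‖φ‖ := by nlinarith [norm_nonneg α, norm_nonneg φ]
    have h8 : ⟪φ, α⟫_ℝ ≤ ⟪φ, φ⟫_ℝ := by nlinarith [norm_nonneg φ]
    have : (n : ℝ) ≤ 2 := by nlinarith
    exact_mod_cast this
  -- n = 2 implies α = φ
  have hcase2 : n = 2 → α = φ := by
    intro h2
    have hips : ⟪φ, α⟫_ℝ = ⟪φ, φ⟫_ℝ := by
      rw [h2] at hns
      push_cast at hns
      linarith
    have h3 : ⟪α - φ, α - φ⟫_ℝ ≤ 0 := by
      rw [real_inner_sub_sub_self, real_inner_comm φ α, hips]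
      linarith
    exact sub_eq_zero.1 (real_inner_self_nonpos.1 h3)
  -- n = 1 case
  have hcase1 : n = 1 → α ≠ φ ∧ φ - α ∈ D.pos := by
    intro h1
    have hn1 : ⟪cv φ, α⟫_ℝ = 1 := by rw [hn, h1]; norm_num
    have hne : α ≠ φ := by
      rintro rfl
      rw [inner_cv_self hs.ne'] at hn1
      norm_num at hn1
    have hγ : aRefl φ 0 α ∈ D.Φ0 := D.root_refl_mem φ hφΦ α hαΦ
    have hγval : aRefl φ 0 α = α - φ := by
      rw [aRefl_apply' hs.ne', hn1, one_smul]
    have hnegγ : φ - α ∈ D.Φ0 := by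
      have h3 := D.root_neg_mem _ hγ
      rw [hγval, neg_sub] at h3
      exact h3
    rcases D.pos_dichotomy _ hnegγ with h | h
    · exact ⟨hne, h.1⟩
    exfalso
    have hmem : α - φ ∈ D.pos := by
      have := h.2
      rwa [neg_sub] at this
    obtain ⟨nn, hnn⟩ := D.pos_nat_comb _ hmem
    obtain ⟨pp, hpp⟩ := D.hroot_highest α hαΦ
    have heq : ∑ i', ((nn i' : ℝ) + (pp i' : ℝ)) • D.simple i' = 0 := by
      have hsplit : ∀ i' ∈ Finset.univ,
          ((nn i' : ℝ) + (pp i' : ℝ)) • D.simple i'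
          = (nn i' : ℝ) • D.simple i' + (pp i' : ℝ) • D.simple i' := by
        intro i' _
        rw [add_smul]
      rw [Finset.sum_congr rfl hsplit, Finset.sum_add_distrib, ← hnn, ← hpp]
      abel
    have hz := D.coeff_zero _ heq
    have hpp0 : φ - α = 0 := by
      rw [hpp]
      apply Finset.sum_eq_zero
      intro i' _
      have h2 := hz i'
      have h3 : (0 : ℝ) ≤ (nn i' : ℝ) := Nat.cast_nonneg _
      have h4 : (0 : ℝ) ≤ (pp i' : ℝ) := Nat.cast_nonneg _
      have : (pp i' : ℝ) = 0 := by linarith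
      rw [this, zero_smul]
    exact hne (by rw [← sub_eq_zero, ← neg_sub φ α, hpp0, neg_zero])
  interval_cases n
  · left; rw [hn]; norm_num
  · right; left
    exact ⟨by rw [hn]; norm_num, (hcase1 rfl).1, (hcase1 rfl).2⟩
  · right; right; exact hcase2 rfl

lemma prod_reindex {M : Type*} [CommMonoid M] (s : Finset E) (σ : E → E)
    (hmem : ∀ a ∈ s, σ a ∈ s) (hinv : ∀ a ∈ s, σ (σ a) = a) (f : E → M) :
    ∏ a ∈ s, f a = ∏ a ∈ s, f (σ a) :=
  Finset.prod_nbij' σ σ hmem hmem hinv hinv (fun a ha => by rw [hinv a ha])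

lemma statement17_simple (D : Data E) {F : Type*} [Field F] (k : E → Fˣ)
    (hk : ∀ α ∈ D.Φ0, ∀ w ∈ D.W0, k (w.linear α) = k α)
    (Λ : AddSubgroup E)
    (hint : ∀ α ∈ D.Φ0, ∀ lam ∈ Λ, ∃ n : ℤ, ⟪α, lam⟫_ℝ = (n : ℝ))
    (y : E) (i : Fin D.r) :
    (aRefl (D.simple i) 0 y = y →
      sweight D k y (cv (D.simple i)) = k (D.simple i) ^ (-2 : ℤ) ∧
      ∀ lam ∈ Λ, sweight D k y (aRefl (D.simple i) 0 lam) =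
        k (D.simple i) ^ (2 * ⌊⟪D.simple i, lam⟫_ℝ⌋) * sweight D k y lam) ∧
    (aRefl (D.simple i) 0 y ≠ y → ∀ lam ∈ Λ,
      sweight D k y (aRefl (D.simple i) 0 lam) =
        sweight D k (aRefl (D.simple i) 0 y) lam) := by
  set β := D.simple i with hβdef
  have hβpos : β ∈ D.pos := D.simple_mem_pos i
  have hβΦ : β ∈ D.Φ0 := D.pos_subset hβpos
  have hs : (0 : ℝ) < ⟪β, β⟫_ℝ := D.inner_self_pos' hβΦ
  have hβ0 : β ≠ 0 := D.root_ne_zero β hβΦ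
  have hcvβ : cv β ≠ 0 := smul_ne_zero (div_ne_zero two_ne_zero hs.ne') hβ0
  -- fixed point characterisation
  have hfix : aRefl β 0 y = y ↔ ⟪β, y⟫_ℝ = 0 := by
    rw [aRefl_apply' hs.ne']
    constructor
    · intro h
      have h2 : ⟪cv β, y⟫_ℝ • β = 0 := by
        have h3 := congrArg (fun t => y - t) h
        simpa using h3
      rcases smul_eq_zero.1 h2 with h3 | h3
      · rw [inner_cv] at h3
        rcases mul_eq_zero.1 h3 with h4 | h4
        · exact absurd h4 (div_ne_zero two_ne_zero hs.ne')
        · exact h4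
      · exact absurd h3 hβ0
    · intro h
      rw [inner_cv, h, mul_zero, zero_smul, sub_zero]
  -- the involution
  set σ : E → E := fun α => if α = β then β else aRefl β 0 α with hσdef
  have hσβ : σ β = β := by rw [hσdef]; simp
  have hσne : ∀ α, α ≠ β → σ α = aRefl β 0 α := by
    intro α h
    rw [hσdef]
    simp [h]
  have hreflneβ : ∀ α ∈ D.pos, α ≠ β → aRefl β 0 α ≠ β := by
    intro α hα h hEq
    have h2 : α = -β := by
      have h3 := congrArg (aRefl β 0) hEq
      rwa [aRefl_aRefl, aRefl_self hs.ne'] at h3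
    exact D.neg_not_pos hβpos (h2 ▸ hα)
  have hσmem : ∀ α ∈ D.pos, σ α ∈ D.pos := by
    intro α hα
    by_cases h : α = β
    · rw [h, hσβ]; exact hβpos
    · rw [hσne α h]
      exact D.refl_simple_mem_pos i hα (by rwa [← hβdef])
  have hσinv : ∀ α ∈ D.pos, σ (σ α) = α := by
    intro α hα
    by_cases h : α = β
    · rw [h, hσβ, hσβ]
    · rw [hσne α h, hσne _ (hreflneβ α hα h), aRefl_aRefl]
  have hσk : ∀ α ∈ D.pos, k (σ α) = k α := by
    intro α hα
    by_cases h : α = β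
    · rw [h, hσβ]
    · rw [hσne α h]
      exact D.k_aRefl k hk hβΦ (D.pos_subset hα)
  have hinn : ∀ α z, ⟪aRefl β 0 α, z⟫_ℝ = ⟪α, aRefl β 0 z⟫_ℝ := fun α z => inner_aRefl β α z
  constructor
  · -- part (1)
    intro hfixy
    have hy : ⟪β, y⟫_ℝ = 0 := hfix.1 hfixy
    constructor
    · -- claim (1).1
      unfold sweight
      rw [← Finset.mul_prod_erase _ _ hβpos]
      have hterm : k β ^ (eta ⟪β, y⟫_ℝ * ⌊⟪β, cv β⟫_ℝ⌋) = k β ^ (-2 : ℤ) := by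
        have h1 : ⟪β, cv β⟫_ℝ = 2 := by
          rw [real_inner_comm]
          exact inner_cv_self hs.ne'
        rw [hy, eta_zero, h1]
        norm_num
      rw [hterm]
      have herase : ∏ α ∈ D.pos.erase β, k α ^ (eta ⟪α, y⟫_ℝ * ⌊⟪α, cv β⟫_ℝ⌋) = 1 := by
        apply Finset.prod_involution (g := fun a _ => σ a)
        · intro a ha
          have hamem : a ∈ D.pos := Finset.mem_of_mem_erase ha
          have hane : a ≠ β := Finset.ne_of_mem_erase ha
          rw [hσne a hane]
          have h1 : ⟪aRefl β 0 a, y⟫_ℝ = ⟪a, y⟫_ℝ := by rw [hinn, hfixy]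
          have h2 : ⟪aRefl β 0 a, cv β⟫_ℝ = -⟪a, cv β⟫_ℝ := by
            rw [hinn, aRefl_cv hs.ne', inner_neg_right]
          have h3 : ⌊-⟪a, cv β⟫_ℝ⌋ = -⌊⟪a, cv β⟫_ℝ⌋ := by
            obtain ⟨n, hn⟩ := D.root_crystal a (D.pos_subset hamem) β hβΦ
            exact floor_neg_int (by rw [real_inner_comm]; exact hn)
          rw [D.k_aRefl k hk hβΦ (D.pos_subset hamem), h1, h2, h3, ← zpow_add,
            mul_neg, add_neg_cancel, zpow_zero]
        · intro a ha hfa hEq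
          apply hfa
          have hamem : a ∈ D.pos := Finset.mem_of_mem_erase ha
          have hane : a ≠ β := Finset.ne_of_mem_erase ha
          rw [hσne a hane] at hEq
          have h2 : ⟪cv β, a⟫_ℝ • β = 0 := by
            have h3 := hEq
            rw [aRefl_apply' hs.ne'] at h3
            have h4 := congrArg (fun t => a - t) h3
            simpa using h4
          have hz : ⟪cv β, a⟫_ℝ = 0 := by
            rcases smul_eq_zero.1 h2 with h3 | h3
            · exact h3
            · exact absurd h3 hβ0
          have h5 : ⟪a, cv β⟫_ℝ = 0 := by rw [real_inner_comm]; exact hz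
          rw [h5]
          norm_num
        · intro a ha
          have hamem : a ∈ D.pos := Finset.mem_of_mem_erase ha
          have hane : a ≠ β := Finset.ne_of_mem_erase ha
          refine Finset.mem_erase.2 ⟨?_, hσmem a hamem⟩
          rw [hσne a hane]
          exact hreflneβ a hamem hane
        · intro a ha
          exact hσinv a (Finset.mem_of_mem_erase ha)
      rw [herase, mul_one]
    · -- claim (1).2
      intro lam hlam
      obtain ⟨L, hL⟩ := hint β hβΦ lam hlam
      unfold sweight
      rw [prod_reindex D.pos σ hσmem hσinv]
      have hpt : ∀ α ∈ D.pos,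
          k (σ α) ^ (eta ⟪σ α, y⟫_ℝ * ⌊⟪σ α, aRefl β 0 lam⟫_ℝ⌋) =
          k α ^ (eta ⟪α, y⟫_ℝ * ⌊⟪α, lam⟫_ℝ⌋) *
            (if α = β then k β ^ (2 * ⌊⟪β, lam⟫_ℝ⌋) else 1) := by
        intro α hα
        by_cases h : α = β
        · subst h
          rw [hσβ, if_pos rfl]
          have h1 : ⟪β, aRefl β 0 lam⟫_ℝ = -⟪β, lam⟫_ℝ := by
            rw [← hinn, aRefl_self hs.ne', inner_neg_left]
          rw [h1, floor_neg_int hL, hy, eta_zero, ← zpow_add]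
          congr 1
          ring
        · rw [hσne α h, if_neg h, mul_one]
          have h1 : ⟪aRefl β 0 α, y⟫_ℝ = ⟪α, y⟫_ℝ := by rw [hinn, hfixy]
          have h2 : ⟪aRefl β 0 α, aRefl β 0 lam⟫_ℝ = ⟪α, lam⟫_ℝ := by
            rw [hinn, aRefl_aRefl]
          rw [D.k_aRefl k hk hβΦ (D.pos_subset hα), h1, h2]
      rw [Finset.prod_congr rfl hpt, Finset.prod_mul_distrib,
        Finset.prod_ite_eq' D.pos β (fun _ => k β ^ (2 * ⌊⟪β, lam⟫_ℝ⌋)), if_pos hβpos,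
        mul_comm]
  · -- part (2)
    intro hne lam hlam
    have hy : ⟪β, y⟫_ℝ ≠ 0 := fun h => hne (hfix.2 h)
    obtain ⟨L, hL⟩ := hint β hβΦ lam hlam
    unfold sweight
    rw [prod_reindex D.pos σ hσmem hσinv]
    apply Finset.prod_congr rfl
    intro α hα
    by_cases h : α = β
    · subst h
      rw [hσβ]
      have h1 : ⟪β, aRefl β 0 lam⟫_ℝ = -⟪β, lam⟫_ℝ := by
        rw [← hinn, aRefl_self hs.ne', inner_neg_left]
      have h2 : ⟪β, aRefl β 0 y⟫_ℝ = -⟪β, y⟫_ℝ := by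
        rw [← hinn, aRefl_self hs.ne', inner_neg_left]
      rw [h1, h2, floor_neg_int hL, eta_neg hy]
      congr 1
      ring
    · rw [hσne α h]
      have h1 : ⟪aRefl β 0 α, y⟫_ℝ = ⟪α, aRefl β 0 y⟫_ℝ := hinn α y
      have h2 : ⟪aRefl β 0 α, aRefl β 0 lam⟫_ℝ = ⟪α, lam⟫_ℝ := by
        rw [hinn, aRefl_aRefl]
      rw [D.k_aRefl k hk hβΦ (D.pos_subset hα), h1, h2]

lemma statement17_zero (D : Data E) {F : Type*} [Field F] (k : E → Fˣ)
    (hk : ∀ α ∈ D.Φ0, ∀ w ∈ D.W0, k (w.linear α) = k α)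
    (Λ : AddSubgroup E)
    (hint : ∀ α ∈ D.Φ0, ∀ lam ∈ Λ, ∃ n : ℤ, ⟪α, lam⟫_ℝ = (n : ℝ))
    (y : E) :
    (aRefl (-D.hroot) 1 y = y →
      sweight D k y (cv (-D.hroot)) = k (-D.hroot) ^ (-2 : ℤ) ∧
      ∀ lam ∈ Λ, sweight D k y (aRefl (-D.hroot) 0 lam) =
        k (-D.hroot) ^ (2 * ⌊⟪-D.hroot, lam⟫_ℝ⌋) * sweight D k y lam) ∧
    (aRefl (-D.hroot) 1 y ≠ y → ∀ lam ∈ Λ,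
      sweight D k y (aRefl (-D.hroot) 0 lam) =
        sweight D k (aRefl (-D.hroot) 1 y) lam) := by
  set φ := D.hroot with hφdef
  have hφpos : φ ∈ D.pos := D.hroot_mem_pos
  have hφΦ : φ ∈ D.Φ0 := D.pos_subset hφpos
  have hφ0 : φ ≠ 0 := D.root_ne_zero φ hφΦ
  have hs : (0 : ℝ) < ⟪φ, φ⟫_ℝ := D.inner_self_pos' hφΦ
  have hcvφ : cv φ ≠ 0 := smul_ne_zero (div_ne_zero two_ne_zero hs.ne') hφ0
  have hkφ : k (-φ) = k φ := D.k_neg k hk hφΦ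
  have h2self : ⟪cv φ, φ⟫_ℝ = 2 := inner_cv_self hs.ne'
  have h2self' : ⟪φ, cv φ⟫_ℝ = 2 := by rw [real_inner_comm]; exact h2self
  have hvala : ∀ a : E, ⟪a, cv (-φ)⟫_ℝ = -⟪cv φ, a⟫_ℝ := by
    intro a
    rw [cv_neg, inner_neg_right, real_inner_comm (cv φ) a]
  have happly : aRefl (-φ) 1 y = y + (1 - ⟪φ, y⟫_ℝ) • cv φ := by
    rw [aRefl_apply (by simpa using hs.ne' : ⟪-φ, -φ⟫_ℝ ≠ 0) 1 y, cv_neg, inner_neg_left]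
    module
  have hfix : aRefl (-φ) 1 y = y ↔ ⟪φ, y⟫_ℝ = 1 := by
    rw [happly]
    constructor
    · intro h
      have h2 : (1 - ⟪φ, y⟫_ℝ) • cv φ = 0 := by
        have h3 := congrArg (fun t => t - y) h
        simpa using h3
      rcases smul_eq_zero.1 h2 with h3 | h3
      · linarith
      · exact absurd h3 hcvφ
    · intro h
      rw [h]
      simp
  have hrefl0 : ∀ α : E, ⟪cv φ, α⟫_ℝ = 0 → aRefl φ 0 α = α := by
    intro α h
    rw [aRefl_apply' hs.ne', h, zero_smul, sub_zero]
  have hrefl1 : ∀ α : E, ⟪cv φ, α⟫_ℝ = 1 → aRefl φ 0 α = α - φ := by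
    intro α h
    rw [aRefl_apply' hs.ne', h, one_smul]
  have hreflsub : ∀ α : E, ⟪cv φ, α⟫_ℝ = 1 → aRefl φ 0 (φ - α) = -α := by
    intro α h
    rw [aRefl_apply' hs.ne', inner_sub_right, h2self, h]
    module
  set σ : E → E := fun α => if α = φ then φ else if ⟪cv φ, α⟫_ℝ = 0 then α else φ - α
    with hσdef
  have hσφ : σ φ = φ := by rw [hσdef]; simp
  have hσ0 : ∀ α, α ≠ φ → ⟪cv φ, α⟫_ℝ = 0 → σ α = α := by
    intro α h h0
    rw [hσdef]
    simp [h, h0]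
  have hσ1 : ∀ α, α ≠ φ → ⟪cv φ, α⟫_ℝ = 1 → σ α = φ - α := by
    intro α h h1
    rw [hσdef]
    simp [h, h1]
  have htri : ∀ α ∈ D.pos, α = φ ∨ (α ≠ φ ∧ ⟪cv φ, α⟫_ℝ = 0) ∨
      (α ≠ φ ∧ ⟪cv φ, α⟫_ℝ = 1 ∧ φ - α ∈ D.pos) := by
    intro α hα
    rcases D.hroot_trichotomy hα with h0 | ⟨h1, hne, hmem⟩ | h2
    · by_cases h : α = φ
      · exact Or.inl h
      · exact Or.inr (Or.inl ⟨h, h0⟩)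
    · exact Or.inr (Or.inr ⟨hne, h1, hmem⟩)
    · exact Or.inl h2
  have hφsub0 : ∀ α : E, ⟪cv φ, α⟫_ℝ = 1 → ⟪cv φ, φ - α⟫_ℝ = 1 := by
    intro α h
    rw [inner_sub_right, h2self, h]
    norm_num
  have hsubne : ∀ α ∈ D.pos, ⟪cv φ, α⟫_ℝ = 1 → φ - α ≠ φ := by
    intro α hα h1 hEq
    have h2 : α = 0 := by
      have h3 := congrArg (fun t => φ - t) hEq
      simpa using h3
    exact D.root_ne_zero α (D.pos_subset hα) h2
  have hσmem : ∀ α ∈ D.pos, σ α ∈ D.pos := by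
    intro α hα
    rcases htri α hα with h | ⟨h, h0⟩ | ⟨h, h1, hmem⟩
    · rw [h, hσφ]; exact hφpos
    · rw [hσ0 α h h0]; exact hα
    · rw [hσ1 α h h1]; exact hmem
  have hσinv : ∀ α ∈ D.pos, σ (σ α) = α := by
    intro α hα
    rcases htri α hα with h | ⟨h, h0⟩ | ⟨h, h1, hmem⟩
    · rw [h, hσφ, hσφ]
    · rw [hσ0 α h h0, hσ0 α h h0]
    · rw [hσ1 α h h1, hσ1 (φ - α) (hsubne α hα h1) (hφsub0 α h1), sub_sub_cancel]
  have hσk : ∀ α ∈ D.pos, k (σ α) = k α := by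
    intro α hα
    rcases htri α hα with h | ⟨h, h0⟩ | ⟨h, h1, hmem⟩
    · rw [h, hσφ]
    · rw [hσ0 α h h0]
    · rw [hσ1 α h h1]
      have hγ : aRefl φ 0 α ∈ D.Φ0 := D.root_refl_mem φ hφΦ α (D.pos_subset hα)
      have hγval := hrefl1 α h1
      have hres : k (φ - α) = k (-(α - φ)) := by rw [neg_sub]
      rw [hres, D.k_neg k hk (hγval ▸ hγ), ← hγval,
        D.k_aRefl k hk hφΦ (D.pos_subset hα)]
  have hswap : ∀ α lam : E, ⟪α, aRefl (-φ) 0 lam⟫_ℝ = ⟪aRefl φ 0 α, lam⟫_ℝ := by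
    intro α lam
    rw [aRefl_neg_zero, ← inner_aRefl]
  have hzval : ∀ α : E, ⟪α, aRefl (-φ) 1 y⟫_ℝ
      = ⟪α, y⟫_ℝ + (1 - ⟪φ, y⟫_ℝ) * ⟪cv φ, α⟫_ℝ := by
    intro α
    rw [happly, inner_add_right, real_inner_smul_right, real_inner_comm (cv φ) α]
  constructor
  · -- part (1)
    intro hfixy
    have hu : ⟪φ, y⟫_ℝ = 1 := hfix.1 hfixy
    constructor
    · -- claim (1).1
      unfold sweight
      rw [← Finset.mul_prod_erase _ _ hφpos]
      have hterm : k φ ^ (eta ⟪φ, y⟫_ℝ * ⌊⟪φ, cv (-φ)⟫_ℝ⌋) = k φ ^ (-2 : ℤ) := by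
        have h1 : ⟪φ, cv (-φ)⟫_ℝ = -2 := by
          rw [cv_neg, inner_neg_right, h2self']
        rw [h1, hu, eta_one]
        norm_num
      rw [hterm, hkφ]
      have herase : ∏ α ∈ D.pos.erase φ, k α ^ (eta ⟪α, y⟫_ℝ * ⌊⟪α, cv (-φ)⟫_ℝ⌋) = 1 := by
        apply Finset.prod_involution (g := fun a _ => σ a)
        · intro a ha
          have hamem : a ∈ D.pos := Finset.mem_of_mem_erase ha
          have hane : a ≠ φ := Finset.ne_of_mem_erase ha
          rcases htri a hamem with h | ⟨h, h0⟩ | ⟨h, h1, hmem⟩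
          · exact absurd h hane
          · have hv : ⟪a, cv (-φ)⟫_ℝ = 0 := by rw [hvala, h0, neg_zero]
            rw [hσ0 a h h0, hv]
            norm_num
          · rw [hσ1 a h h1]
            have hva : ⟪a, cv (-φ)⟫_ℝ = -1 := by rw [hvala, h1]
            have hvb : ⟪φ - a, cv (-φ)⟫_ℝ = -1 := by rw [hvala, hφsub0 a h1]
            have hketa : k (φ - a) = k a := by
              have h5 := hσk a hamem
              rwa [hσ1 a h h1] at h5
            have hinner : ⟪φ - a, y⟫_ℝ = 1 - ⟪a, y⟫_ℝ := by rw [inner_sub_left, hu]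
            have hm1 : ⌊(-1 : ℝ)⌋ = -1 := by norm_num
            rw [hva, hvb, hketa, hinner, eta_one_sub, hm1, ← zpow_add,
              show eta ⟪a, y⟫_ℝ * -1 + -eta ⟪a, y⟫_ℝ * -1 = 0 by ring, zpow_zero]
        · intro a ha hfa hEq
          apply hfa
          have hamem : a ∈ D.pos := Finset.mem_of_mem_erase ha
          have hane : a ≠ φ := Finset.ne_of_mem_erase ha
          rcases htri a hamem with h | ⟨h, h0⟩ | ⟨h, h1, hmem⟩
          · exact absurd h hane
          · have hv : ⟪a, cv (-φ)⟫_ℝ = 0 := by rw [hvala, h0, neg_zero]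
            rw [hv]
            norm_num
          · exfalso
            rw [hσ1 a h h1] at hEq
            have h3 := congrArg (fun t => t + a) hEq
            simp only [sub_add_cancel] at h3
            have hφ2a : φ = (2 : ℝ) • a := h3.trans (two_smul ℝ a).symm
            rcases D.root_reduced a (D.pos_subset hamem) 2
                (by rw [← hφ2a]; exact hφΦ) with h4 | h4 <;> norm_num at h4
        · intro a ha
          have hamem : a ∈ D.pos := Finset.mem_of_mem_erase ha
          have hane : a ≠ φ := Finset.ne_of_mem_erase ha
          refine Finset.mem_erase.2 ⟨?_, hσmem a hamem⟩
          rcases htri a hamem with h | ⟨h, h0⟩ | ⟨h, h1, hmem⟩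
          · exact absurd h hane
          · rw [hσ0 a h h0]; exact hane
          · rw [hσ1 a h h1]; exact hsubne a hamem h1
        · intro a ha
          exact hσinv a (Finset.mem_of_mem_erase ha)
      rw [herase, mul_one]
    · -- claim (1).2
      intro lam hlam
      obtain ⟨M, hM⟩ := hint φ hφΦ lam hlam
      have hLM : ⌊⟪-φ, lam⟫_ℝ⌋ = -⌊⟪φ, lam⟫_ℝ⌋ := by
        rw [inner_neg_left]
        exact floor_neg_int hM
      unfold sweight
      rw [prod_reindex D.pos σ hσmem hσinv]
      have hpt : ∀ α ∈ D.pos,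
          k (σ α) ^ (eta ⟪σ α, y⟫_ℝ * ⌊⟪σ α, aRefl (-φ) 0 lam⟫_ℝ⌋) =
          k α ^ (eta ⟪α, y⟫_ℝ * ⌊⟪α, lam⟫_ℝ⌋) *
            (if α = φ then k φ ^ (2 * ⌊⟪-φ, lam⟫_ℝ⌋) else 1) := by
        intro α hα
        rcases htri α hα with h | ⟨h, h0⟩ | ⟨h, h1, hmem⟩
        · rw [h, hσφ, if_pos rfl]
          have h1' : ⟪φ, aRefl (-φ) 0 lam⟫_ℝ = -⟪φ, lam⟫_ℝ := by
            rw [hswap, aRefl_self hs.ne', inner_neg_left]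
          rw [h1', floor_neg_int hM, hu, eta_one, hLM, ← zpow_add]
          congr 1
          ring
        · rw [hσ0 α h h0, if_neg h, mul_one]
          have h2' : ⟪α, aRefl (-φ) 0 lam⟫_ℝ = ⟪α, lam⟫_ℝ := by
            rw [hswap, hrefl0 α h0]
          rw [h2']
        · rw [hσ1 α h h1, if_neg h, mul_one]
          obtain ⟨mα, hmα⟩ := hint α (D.pos_subset hα) lam hlam
          have h2' : ⟪φ - α, aRefl (-φ) 0 lam⟫_ℝ = -⟪α, lam⟫_ℝ := by
            rw [hswap, hreflsub α h1, inner_neg_left]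
          have hketa : k (φ - α) = k α := by
            have h5 := hσk α hα
            rwa [hσ1 α h h1] at h5
          have hinner : ⟪φ - α, y⟫_ℝ = 1 - ⟪α, y⟫_ℝ := by rw [inner_sub_left, hu]
          rw [h2', floor_neg_int hmα, hketa, hinner, eta_one_sub]
          congr 1
          ring
      rw [Finset.prod_congr rfl hpt, Finset.prod_mul_distrib,
        Finset.prod_ite_eq' D.pos φ (fun _ => k φ ^ (2 * ⌊⟪-φ, lam⟫_ℝ⌋)), if_pos hφpos,
        mul_comm, hkφ]
  · -- part (2)
    intro hne lam hlam
    have hu1 : ⟪φ, y⟫_ℝ ≠ 1 := fun h => hne (hfix.2 h)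
    obtain ⟨M, hM⟩ := hint φ hφΦ lam hlam
    unfold sweight
    rw [prod_reindex D.pos σ hσmem hσinv]
    apply Finset.prod_congr rfl
    intro α hα
    rcases htri α hα with h | ⟨h, h0⟩ | ⟨h, h1, hmem⟩
    · rw [h, hσφ]
      have h1' : ⟪φ, aRefl (-φ) 0 lam⟫_ℝ = -⟪φ, lam⟫_ℝ := by
        rw [hswap, aRefl_self hs.ne', inner_neg_left]
      have h2' : ⟪φ, aRefl (-φ) 1 y⟫_ℝ = 2 - ⟪φ, y⟫_ℝ := by
        rw [hzval, h2self]
        ring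
      have h3' : eta (2 - ⟪φ, y⟫_ℝ) = -eta ⟪φ, y⟫_ℝ := by
        rw [show (2 : ℝ) - ⟪φ, y⟫_ℝ = 1 - (⟪φ, y⟫_ℝ - 1) by ring, eta_one_sub,
          eta_sub_one hu1]
      rw [h1', h2', floor_neg_int hM, h3']
      congr 1
      ring
    · rw [hσ0 α h h0]
      have h2' : ⟪α, aRefl (-φ) 0 lam⟫_ℝ = ⟪α, lam⟫_ℝ := by rw [hswap, hrefl0 α h0]
      have h3' : ⟪α, aRefl (-φ) 1 y⟫_ℝ = ⟪α, y⟫_ℝ := by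
        rw [hzval, h0]
        ring
      rw [h2', h3']
    · rw [hσ1 α h h1]
      obtain ⟨mα, hmα⟩ := hint α (D.pos_subset hα) lam hlam
      have h2' : ⟪φ - α, aRefl (-φ) 0 lam⟫_ℝ = -⟪α, lam⟫_ℝ := by
        rw [hswap, hreflsub α h1, inner_neg_left]
      have hketa : k (φ - α) = k α := by
        have h5 := hσk α hα
        rwa [hσ1 α h h1] at h5
      have hinner : ⟪φ - α, y⟫_ℝ = ⟪φ, y⟫_ℝ - ⟪α, y⟫_ℝ := inner_sub_left φ α y
      have h3' : ⟪α, aRefl (-φ) 1 y⟫_ℝ = 1 - (⟪φ, y⟫_ℝ - ⟪α, y⟫_ℝ) := by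
        rw [hzval, h1]
        ring
      rw [h2', hketa, hinner, floor_neg_int hmα, h3', eta_one_sub]
      congr 1
      ring

end Aux

end SSV

/-- for `y ∈ E` and `0 ≤ j ≤ r`, with `β_j = Dα_j`:
(1) if `s_j·y = y` then `𝔰_y^{β_j∨} = k_j^{−2}` and `s_{β_j}·𝔰_y = k_j^{2β_j}·𝔰_y` in
`T_Λ`; (2) if `s_j·y ≠ y` then `s_{β_j}·𝔰_y = 𝔰_{s_j·y}` in `T_Λ`. -/
theorem statement17
    {E : Type*} [NormedAddCommGroup E] [InnerProductSpace ℝ E] [FiniteDimensional ℝ E]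
    (D : SSV.Data E) {F : Type*} [Field F] (k : E → Fˣ)
    (hk : ∀ α ∈ D.Φ0, ∀ w ∈ D.W0, k (w.linear α) = k α)
    (Λ : AddSubgroup E) (hΛfg : Λ.FG) (hQΛ : D.Qv ≤ Λ)
    (hint : ∀ α ∈ D.Φ0, ∀ lam ∈ Λ, ∃ n : ℤ, ⟪α, lam⟫_ℝ = (n : ℝ))
    (y : E) (j : Fin (D.r + 1)) :
    (D.sgen j y = y →
      SSV.sweight D k y (SSV.cv (D.asimple j).1) = k ((D.asimple j).1) ^ (-2 : ℤ) ∧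
      ∀ lam ∈ Λ, SSV.sweight D k y (SSV.aRefl (D.asimple j).1 0 lam) =
        k ((D.asimple j).1) ^ (2 * ⌊⟪(D.asimple j).1, lam⟫_ℝ⌋) * SSV.sweight D k y lam) ∧
    (D.sgen j y ≠ y → ∀ lam ∈ Λ,
      SSV.sweight D k y (SSV.aRefl (D.asimple j).1 0 lam) =
        SSV.sweight D k (D.sgen j y) lam) := by
  induction j using Fin.cases with
  | zero =>
    simpa [SSV.Data.sgen, SSV.Data.asimple] using
      SSV.statement17_zero D k hk Λ hint y
  | succ i =>
    simpa [SSV.Data.sgen, SSV.Data.asimple] using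
      SSV.statement17_simple D k hk Λ hint y i
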